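/- Let h(z) = (1/2)(z/(1-z) + z/(1-z)²) and g(z) = -(α/2)(z/(1-z) - z/(1-z)²) for |α| ≤ 1. Then g'(z) = α z h'(z) and Re(1 + z h''(z)/h'(z)) > -1/2 for all |z| < 1; i.e., f_α = h + conj(g) belongs to M(α). -/

import Mathlib

open Complex

private lemma aux_h (z : ℂ) (hz : (1:ℂ) - z ≠ 0) :
    HasDerivAt (fun z : ℂ => (1 / 2) * (z / (1 - z) + z / (1 - z) ^ 2))
      (((1 - z) ^ 3)⁻¹) z := by
  have h1 : HasDerivAt (fun z : ℂ => 1 - z) (-1) z := by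
    simpa using (hasDerivAt_id z).const_sub 1
  have h2 : HasDerivAt (fun z : ℂ => (1 - z) ^ 2) (2 * (1 - z) ^ 1 * (-1)) z := by
    simpa using h1.fun_pow 2
  have ha : HasDerivAt (fun z : ℂ => z / (1 - z))
      ((1 * (1 - z) - z * (-1)) / (1 - z) ^ 2) z := (hasDerivAt_id z).div h1 hz
  have hb : HasDerivAt (fun z : ℂ => z / (1 - z) ^ 2)
      ((1 * (1 - z) ^ 2 - z * (2 * (1 - z) ^ 1 * (-1))) / ((1 - z) ^ 2) ^ 2) z :=
    (hasDerivAt_id z).div h2 (pow_ne_zero 2 hz)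
  have := (ha.fun_add hb).const_mul (1 / 2 : ℂ)
  refine this.congr_deriv ?_
  field_simp
  ring

private lemma aux_h2 (z : ℂ) (hz : (1:ℂ) - z ≠ 0) :
    HasDerivAt (fun z : ℂ => ((1 - z) ^ 3)⁻¹) (3 * ((1 - z) ^ 4)⁻¹) z := by
  have h1 : HasDerivAt (fun z : ℂ => 1 - z) (-1) z := by
    simpa using (hasDerivAt_id z).const_sub 1
  have h3 : HasDerivAt (fun z : ℂ => (1 - z) ^ 3) (3 * (1 - z) ^ 2 * (-1)) z := by
    simpa using h1.fun_pow 3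
  have := h3.inv (pow_ne_zero 3 hz)
  refine this.congr_deriv ?_
  field_simp

private lemma aux_g (α z : ℂ) (hz : (1:ℂ) - z ≠ 0) :
    HasDerivAt (fun z : ℂ => -(α / 2) * (z / (1 - z) - z / (1 - z) ^ 2))
      (α * z * ((1 - z) ^ 3)⁻¹) z := by
  have h1 : HasDerivAt (fun z : ℂ => 1 - z) (-1) z := by
    simpa using (hasDerivAt_id z).const_sub 1
  have h2 : HasDerivAt (fun z : ℂ => (1 - z) ^ 2) (2 * (1 - z) ^ 1 * (-1)) z := by
    simpa using h1.fun_pow 2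
  have ha : HasDerivAt (fun z : ℂ => z / (1 - z))
      ((1 * (1 - z) - z * (-1)) / (1 - z) ^ 2) z := (hasDerivAt_id z).div h1 hz
  have hb : HasDerivAt (fun z : ℂ => z / (1 - z) ^ 2)
      ((1 * (1 - z) ^ 2 - z * (2 * (1 - z) ^ 1 * (-1))) / ((1 - z) ^ 2) ^ 2) z :=
    (hasDerivAt_id z).div h2 (pow_ne_zero 2 hz)
  have := (ha.fun_sub hb).const_mul (-(α / 2) : ℂ)
  refine this.congr_deriv ?_
  field_simp
  ring

theorem stmt10
    (α : ℂ) (hα : ‖α‖ ≤ 1)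
    (h g : ℂ → ℂ)
    (hh : ∀ z, h z = (1 / 2) * (z / (1 - z) + z / (1 - z) ^ 2))
    (hg : ∀ z, g z = -(α / 2) * (z / (1 - z) - z / (1 - z) ^ 2)) :
    h 0 = 0 ∧ deriv h 0 = 1 ∧ g 0 = 0 ∧
      (∀ z : ℂ, ‖z‖ < 1 → deriv g z = α * z * deriv h z) ∧
      (∀ z : ℂ, ‖z‖ < 1 →
        (1 + z * deriv (deriv h) z / deriv h z).re > -(1 / 2)) := by
  have hH : h = fun z : ℂ => (1 / 2) * (z / (1 - z) + z / (1 - z) ^ 2) := funext hh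
  have hG : g = fun z : ℂ => -(α / 2) * (z / (1 - z) - z / (1 - z) ^ 2) := funext hg
  subst hH hG
  have key : ∀ z : ℂ, ‖z‖ < 1 → (1:ℂ) - z ≠ 0 := by
    intro z hz hez
    have : z = 1 := by linear_combination -hez
    rw [this] at hz; simp at hz
  have derivh : ∀ z : ℂ, (1:ℂ) - z ≠ 0 →
      deriv (fun z : ℂ => (1 / 2) * (z / (1 - z) + z / (1 - z) ^ 2)) z
        = ((1 - z) ^ 3)⁻¹ := fun z hz => (aux_h z hz).deriv
  refine ⟨by simp, ?_, by simp, ?_, ?_⟩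
  · rw [derivh 0 (by norm_num)]; norm_num
  · intro z hz
    rw [(aux_g α z (key z hz)).deriv, derivh z (key z hz)]
  · intro z hz
    have hz1 := key z hz
    have hev : deriv (fun z : ℂ => (1 / 2) * (z / (1 - z) + z / (1 - z) ^ 2))
        =ᶠ[nhds z] fun w : ℂ => ((1 - w) ^ 3)⁻¹ := by
      have hne : ∀ᶠ w in nhds z, (1:ℂ) - w ≠ 0 :=
        ((continuous_const.sub continuous_id).continuousAt).eventually_ne hz1
      filter_upwards [hne] with w hw using derivh w hw
    have hd2 : deriv (deriv (fun z : ℂ => (1 / 2) * (z / (1 - z) + z / (1 - z) ^ 2))) z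
        = 3 * ((1 - z) ^ 4)⁻¹ := by
      rw [hev.deriv_eq]; exact (aux_h2 z hz1).deriv
    rw [hd2, derivh z hz1]
    have heq : (1 : ℂ) + z * (3 * ((1 - z) ^ 4)⁻¹) / ((1 - z) ^ 3)⁻¹
        = 1 + 3 * z / (1 - z) := by
      field_simp
    rw [heq]
    have habs : ‖z‖ < 1 := hz
    have hnormsq : z.re ^ 2 + z.im ^ 2 < 1 := by
      have h1 : Complex.normSq z < 1 := by
        rw [← Complex.sq_norm]
        nlinarith [norm_nonneg z]
      rw [Complex.normSq_apply] at h1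
      nlinarith
    have hD : (0:ℝ) < (1 - z.re) ^ 2 + z.im ^ 2 := by
      have h1 : Complex.normSq (1 - z) > 0 := Complex.normSq_pos.mpr hz1
      rw [Complex.normSq_apply] at h1
      simp at h1
      nlinarith [h1]
    have hre : ((1:ℂ) + 3 * z / (1 - z)).re
        = 1 + (3 * z.re * (1 - z.re) - 3 * z.im ^ 2) / ((1 - z.re) ^ 2 + z.im ^ 2) := by
      simp [Complex.add_re, Complex.div_re, Complex.normSq_apply]
      ring
    rw [hre]
    have hN : -(3/2 : ℝ) < (3 * z.re * (1 - z.re) - 3 * z.im ^ 2) / ((1 - z.re) ^ 2 + z.im ^ 2) := by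
      rw [lt_div_iff₀ hD]
      nlinarith [hnormsq]
    linarith
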